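/- Let L ≥ 1, b : {0,1,...,L+1} → ℝ with b(1) = −b(0), and δ_j = 1/2 − b(j), \bar δ_j = 1/2 + b(j) all positive. Suppose φ* : {0,...,L+1} → ℝ satisfies φ*(x) − (1/2)[φ*(x+1) + φ*(x−1)] − b(x−1)φ*(x−1) + b(x+1)φ*(x+1) = 0 for 1 ≤ x ≤ L, with boundary conditions φ*(0) = φ*(1), φ*(L+1) = φ*(L). Then φ*(y) = φ*(1) ∏_{j=1}^{y−1} \bar δ_j/δ_{j+1} for 1 ≤ y ≤ L. -/

import Mathlib

open Finset

theorem stmt_2 (L : ℕ) (hL : 1 ≤ L) (b : ℕ → ℝ)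
    (hb1 : b 1 = - b 0)
    (hpos : ∀ j, j ≤ L + 1 → 0 < 1/2 - b j ∧ 0 < 1/2 + b j)
    (φ : ℕ → ℝ)
    (heq : ∀ x, 1 ≤ x → x ≤ L →
      φ x - (1/2) * (φ (x+1) + φ (x-1)) - b (x-1) * φ (x-1) + b (x+1) * φ (x+1) = 0)
    (hbc0 : φ 0 = φ 1) (hbcL : φ (L+1) = φ L) :
    ∀ y, 1 ≤ y → y ≤ L →
      φ y = φ 1 * ∏ j ∈ Icc 1 (y-1), (1/2 + b j) / (1/2 - b (j+1)) := by
  have key : ∀ x, 1 ≤ x → x ≤ L →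
      (1/2 - b (x+1)) * φ (x+1) = (1/2 + b x) * φ x := by
    intro x
    induction x with
    | zero => intro h; omega
    | succ n ih =>
      intro _ hle
      rcases Nat.eq_zero_or_pos n with hn | hn
      · subst hn
        have h1 := heq 1 le_rfl hL
        norm_num [hbc0, hb1] at h1 ⊢
        nlinarith [h1]
      · have hx := heq (n+1) (by omega) hle
        have hprev := ih hn (by omega)
        simp only [Nat.add_sub_cancel] at hx
        nlinarith [hx, hprev]
  intro y
  induction y with
  | zero => intro h; omega
  | succ n ih =>
    intro _ hle
    rcases Nat.eq_zero_or_pos n with hn | hn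
    · subst hn; simp
    · have hrec := key n hn (by omega)
      have hne : (1/2 - b (n+1)) ≠ 0 := ne_of_gt (hpos (n+1) (by omega)).1
      have hφ : φ (n+1) = φ n * ((1/2 + b n) / (1/2 - b (n+1))) := by
        rw [← mul_div_assoc, eq_div_iff hne]
        nlinarith [hrec]
      rw [hφ, ih hn (by omega)]
      rw [show n + 1 - 1 = n from rfl]
      rw [show Icc 1 n = Icc 1 (n - 1 + 1) from by congr 1; omega,
        Finset.prod_Icc_succ_top (by omega)]
      rw [show n - 1 + 1 = n from by omega]
      ring
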